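/- Let ζ, ξ, ξ' be random variables on a probability space with ζ standard normal and ξ, ξ' independent standard normal, and for ρ ∈ [−1, 1] set η = ρ·ξ + √(1 − ρ²)·ξ'. Let 0 < ε < 1, κ, μ, ν ∈ ℝ and ψ, σ, τ > 0. Then the random vector (ε·exp(κ + ψ·ζ), (1 − ε)·exp(κ + ψ·ζ)) has the same distribution as (exp(μ + σ·ξ), exp(ν + τ·η)) if and only if ψ = τ = σ, ρ = 1, ε = e^μ/(e^μ + e^ν) and κ = log(e^μ + e^ν). -/

import Mathlib

open Real MeasureTheory ProbabilityTheory
open scoped NNReal ENNReal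

lemma gaussianPDFReal_continuous (m : ℝ) (v : ℝ≥0) : Continuous (gaussianPDFReal m v) := by
  unfold gaussianPDFReal
  fun_prop

lemma gaussianReal_inj {m m' : ℝ} {v v' : ℝ≥0} (hv : v ≠ 0) (hv' : v' ≠ 0)
    (h : gaussianReal m v = gaussianReal m' v') : m = m' ∧ v = v' := by
  have h1 : gaussianPDF m v =ᵐ[volume] gaussianPDF m' v' := by
    refine (rnDeriv_gaussianReal m v).symm.trans ?_
    rw [h]; exact rnDeriv_gaussianReal m' v'
  have h2 : gaussianPDFReal m v =ᵐ[volume] gaussianPDFReal m' v' := by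
    filter_upwards [h1] with x hx
    rwa [gaussianPDF, gaussianPDF, ENNReal.ofReal_eq_ofReal_iff (gaussianPDFReal_nonneg _ _ _)
      (gaussianPDFReal_nonneg _ _ _)] at hx
  have h3 : gaussianPDFReal m v = gaussianPDFReal m' v' :=
    ((gaussianPDFReal_continuous m v).ae_eq_iff_eq volume (gaussianPDFReal_continuous m' v')).mp h2
  have hV : (0:ℝ) < v := by exact_mod_cast pos_iff_ne_zero.mpr hv
  have hV' : (0:ℝ) < v' := by exact_mod_cast pos_iff_ne_zero.mpr hv'
  have hc : (0:ℝ) < √(2 * π * v) := Real.sqrt_pos.mpr (by nlinarith [pi_pos])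
  have hc' : (0:ℝ) < √(2 * π * v') := Real.sqrt_pos.mpr (by nlinarith [pi_pos])
  have hlog : ∀ x : ℝ, Real.log ((√(2 * π * v))⁻¹) + (-(x - m)^2/(2*(v:ℝ)))
      = Real.log ((√(2 * π * v'))⁻¹) + (-(x - m')^2/(2*(v':ℝ))) := by
    intro x
    have hx := congrFun h3 x
    simp only [gaussianPDFReal] at hx
    have hL := congrArg Real.log hx
    rwa [Real.log_mul (inv_pos.mpr hc).ne' (Real.exp_ne_zero _),
      Real.log_mul (inv_pos.mpr hc').ne' (Real.exp_ne_zero _), Real.log_exp, Real.log_exp] at hL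
  have e0 := hlog m
  have e1 := hlog (m+1)
  have e2 := hlog (m-1)
  have hm : m = m' := by
    have h12 : (m+1-m')^2/(2*(v':ℝ)) = (m-1-m')^2/(2*(v':ℝ)) := by
      have hA : (m+1-m)^2 = (m-1-m)^2 := by ring
      have hB : -(m+1-m)^2/(2*(v:ℝ)) = -(m-1-m)^2/(2*(v:ℝ)) := by rw [hA]
      have := e1; have := e2
      have h5 : -(m+1-m')^2/(2*(v':ℝ)) = -(m-1-m')^2/(2*(v':ℝ)) := by linarith
      have h6 := congrArg Neg.neg h5
      simpa [neg_div] using h6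
    rw [div_eq_div_iff (by linarith) (by linarith)] at h12
    nlinarith [h12]
  subst hm
  have hVeq : (v:ℝ) = (v':ℝ) := by
    have t0 : -(m - m)^2/(2*(v:ℝ)) = 0 := by ring_nf
    have t0' : -(m - m)^2/(2*(v':ℝ)) = 0 := by ring_nf
    have t1 : -(m+1 - m)^2/(2*(v:ℝ)) = -(1/(2*(v:ℝ))) := by rw [show (m+1-m) = (1:ℝ) by ring]; ring
    have t1' : -(m+1 - m)^2/(2*(v':ℝ)) = -(1/(2*(v':ℝ))) := by
      rw [show (m+1-m) = (1:ℝ) by ring]; ring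
    rw [t0, t0'] at e0
    rw [t1, t1'] at e1
    have hA : (1:ℝ)/(2*(v:ℝ)) = 1/(2*(v':ℝ)) := by linarith
    rw [div_eq_div_iff (by linarith) (by linarith)] at hA
    linarith
  exact ⟨rfl, NNReal.coe_injective hVeq⟩

lemma gaussianReal_singleton (m : ℝ) {v : ℝ≥0} (hv : v ≠ 0) (x : ℝ) :
    gaussianReal m v {x} = 0 :=
  gaussianReal_absolutelyContinuous m hv Real.volume_singleton

lemma var_ne_zero {a : ℝ} (ha : a ≠ 0) : (⟨a^2, sq_nonneg a⟩ : ℝ≥0) * 1 ≠ 0 := by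
  intro hcon
  have h2 : a^2 = 0 := by
    have h := congrArg NNReal.toReal hcon; change a^2 * 1 = 0 at h; simpa using h
  exact ha (by nlinarith)

lemma map_affine {Ω : Type*} [MeasurableSpace Ω] {P : Measure Ω} {X : Ω → ℝ}
    (hXm : Measurable X) (hX : Measure.map X P = gaussianReal 0 1) (a b : ℝ) :
    Measure.map (fun ω => b + a * X ω) P = gaussianReal b (⟨a^2, sq_nonneg a⟩ * 1) := by
  have h0 : (fun ω => b + a * X ω) = ((b + ·) ∘ ((a * ·) ∘ X)) := rfl
  rw [h0, ← Measure.map_map (measurable_const_add b) ((measurable_const_mul a).comp hXm),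
    ← Measure.map_map (measurable_const_mul a) hXm, hX, gaussianReal_map_const_mul,
    gaussianReal_map_const_add]
  norm_num
  congr 1; exact (mul_one _).symm

lemma degenerate {Ω : Type*} [MeasurableSpace Ω] (P : Measure Ω) [IsProbabilityMeasure P]
    (ξ ξ' : Ω → ℝ) (hξmeas : Measurable ξ) (hξ'meas : Measurable ξ')
    (hξ : Measure.map ξ P = gaussianReal 0 1)
    (hξ' : Measure.map ξ' P = gaussianReal 0 1)
    (hindep : IndepFun ξ ξ' P) (a b C c : ℝ)
    (h : Measure.map (fun ω => C + a * ξ ω + b * ξ' ω) P = Measure.dirac c) :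
    a = 0 ∧ b = 0 ∧ C = c := by
  have hpair : Measure.map (fun ω => (ξ ω, ξ' ω)) P
      = (gaussianReal 0 1).prod (gaussianReal 0 1) :=
    ((indepFun_iff_map_prod_eq_prod_map_map hξmeas.aemeasurable
      hξ'meas.aemeasurable).mp hindep).trans (by rw [hξ, hξ'])
  have hmeas2 : Measurable (fun p : ℝ × ℝ => C + a * p.1 + b * p.2) := by fun_prop
  have hb : b = 0 := by
    by_contra hb
    have hmm : Measure.map (fun p : ℝ × ℝ => C + a * p.1 + b * p.2)
        ((gaussianReal 0 1).prod (gaussianReal 0 1)) = Measure.dirac c := by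
      rw [← hpair, Measure.map_map hmeas2 (hξmeas.prodMk hξ'meas)]
      exact h
    have h1 := congrArg (fun μ : Measure ℝ => μ {c}) hmm
    simp only [Measure.map_apply hmeas2 (measurableSet_singleton c)] at h1
    rw [Measure.prod_apply (hmeas2 (measurableSet_singleton c))] at h1
    have hzero : ∀ x : ℝ, (gaussianReal 0 1)
        (Prod.mk x ⁻¹' ((fun p : ℝ × ℝ => C + a * p.1 + b * p.2) ⁻¹' {c})) = 0 := by
      intro x
      have hset : (Prod.mk x ⁻¹' ((fun p : ℝ × ℝ => C + a * p.1 + b * p.2) ⁻¹' {c}))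
          = {(c - C - a * x) / b} := by
        ext y
        simp only [Set.mem_preimage, Set.mem_singleton_iff]
        constructor
        · intro hy; field_simp; linarith
        · intro hy; rw [hy]; field_simp; ring
      rw [hset]
      exact gaussianReal_singleton _ one_ne_zero _
    simp only [hzero, lintegral_zero] at h1
    rw [Measure.dirac_apply_of_mem (Set.mem_singleton c)] at h1
    exact zero_ne_one h1
  subst hb
  have ha : a = 0 := by
    by_contra ha
    have hfun : (fun ω => C + a * ξ ω + 0 * ξ' ω) = (fun ω => C + a * ξ ω) := by
      funext ω; ring
    have hvne := var_ne_zero ha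
    rw [hfun, map_affine hξmeas hξ a C] at h
    have h1 := congrArg (fun μ : Measure ℝ => μ {c}) h
    rw [Measure.dirac_apply_of_mem (Set.mem_singleton c)] at h1
    exact zero_ne_one ((gaussianReal_singleton _ hvne c).symm.trans h1)
  subst ha
  have hfun : (fun ω => C + 0 * ξ ω + 0 * ξ' ω) = (fun _ : Ω => C) := by funext ω; ring
  rw [hfun, Measure.map_const] at h
  simp only [measure_univ, one_smul] at h
  have h1 := congrArg (fun μ : Measure ℝ => μ {c}) h
  simp only [Measure.dirac_apply_of_mem (Set.mem_singleton c)] at h1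
  by_contra hC
  rw [Measure.dirac_apply' _ (measurableSet_singleton c),
    Set.indicator_of_notMem (by simpa using hC)] at h1
  exact zero_ne_one h1

theorem oneAsset_eq_twoAssets_iff {Ω : Type*} [MeasurableSpace Ω] (P : Measure Ω)
    [IsProbabilityMeasure P] (ζ ξ ξ' : Ω → ℝ)
    (hζmeas : Measurable ζ) (hξmeas : Measurable ξ) (hξ'meas : Measurable ξ')
    (hζ : Measure.map ζ P = gaussianReal 0 1)
    (hξ : Measure.map ξ P = gaussianReal 0 1)
    (hξ' : Measure.map ξ' P = gaussianReal 0 1)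
    (hindep : IndepFun ξ ξ' P)
    (ρ : ℝ) (hρ : ρ ∈ Set.Icc (-1 : ℝ) 1)
    (ε κ μ ν ψ σ τ : ℝ) (hε0 : 0 < ε) (hε1 : ε < 1)
    (hψ : 0 < ψ) (hσ : 0 < σ) (hτ : 0 < τ) :
    (Measure.map (fun ω =>
        (ε * Real.exp (κ + ψ * ζ ω), (1 - ε) * Real.exp (κ + ψ * ζ ω))) P
      = Measure.map (fun ω =>
        (Real.exp (μ + σ * ξ ω),
         Real.exp (ν + τ * (ρ * ξ ω + Real.sqrt (1 - ρ ^ 2) * ξ' ω)))) P)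
    ↔ (ψ = τ ∧ τ = σ ∧ ρ = 1 ∧ ε = Real.exp μ / (Real.exp μ + Real.exp ν) ∧
        κ = Real.log (Real.exp μ + Real.exp ν)) := by
  have h1ε : (0:ℝ) < 1 - ε := by linarith
  constructor
  · intro h
    have hpm1 : Measurable (fun ω =>
        (ε * Real.exp (κ + ψ * ζ ω), (1 - ε) * Real.exp (κ + ψ * ζ ω))) := by fun_prop
    have hpm2 : Measurable (fun ω =>
        (Real.exp (μ + σ * ξ ω),
         Real.exp (ν + τ * (ρ * ξ ω + Real.sqrt (1 - ρ ^ 2) * ξ' ω)))) := by fun_prop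
    -- first marginal (after log)
    have hg1 : Measurable (fun p : ℝ × ℝ => Real.log p.1) :=
      Real.measurable_log.comp measurable_fst
    have hA : Measure.map ((fun p : ℝ × ℝ => Real.log p.1) ∘ (fun ω =>
          (ε * Real.exp (κ + ψ * ζ ω), (1 - ε) * Real.exp (κ + ψ * ζ ω)))) P
        = Measure.map ((fun p : ℝ × ℝ => Real.log p.1) ∘ (fun ω =>
          (Real.exp (μ + σ * ξ ω),
           Real.exp (ν + τ * (ρ * ξ ω + Real.sqrt (1 - ρ ^ 2) * ξ' ω))))) P := by
      rw [← Measure.map_map hg1 hpm1, ← Measure.map_map hg1 hpm2, h]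
    have hfL : ((fun p : ℝ × ℝ => Real.log p.1) ∘ (fun ω =>
          (ε * Real.exp (κ + ψ * ζ ω), (1 - ε) * Real.exp (κ + ψ * ζ ω))))
        = fun ω => (Real.log ε + κ) + ψ * ζ ω := by
      funext ω
      simp only [Function.comp_apply]
      rw [Real.log_mul hε0.ne' (Real.exp_ne_zero _), Real.log_exp]
      ring
    have hfR : ((fun p : ℝ × ℝ => Real.log p.1) ∘ (fun ω =>
          (Real.exp (μ + σ * ξ ω),
           Real.exp (ν + τ * (ρ * ξ ω + Real.sqrt (1 - ρ ^ 2) * ξ' ω)))))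
        = fun ω => μ + σ * ξ ω := by
      funext ω
      simp only [Function.comp_apply, Real.log_exp]
    rw [hfL, hfR, map_affine hζmeas hζ ψ (Real.log ε + κ), map_affine hξmeas hξ σ μ] at hA
    obtain ⟨hmean, hvar⟩ := gaussianReal_inj (var_ne_zero hψ.ne') (var_ne_zero hσ.ne') hA
    have hψσ : ψ = σ := by
      have h2 : ψ^2 = σ^2 := by
        have h := congrArg NNReal.toReal hvar; change ψ^2 * 1 = σ^2 * 1 at h; simpa using h
      nlinarith
    -- log-ratio
    have hg2 : Measurable (fun p : ℝ × ℝ => Real.log p.2 - Real.log p.1) :=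
      (Real.measurable_log.comp measurable_snd).sub (Real.measurable_log.comp measurable_fst)
    have hB : Measure.map ((fun p : ℝ × ℝ => Real.log p.2 - Real.log p.1) ∘ (fun ω =>
          (ε * Real.exp (κ + ψ * ζ ω), (1 - ε) * Real.exp (κ + ψ * ζ ω)))) P
        = Measure.map ((fun p : ℝ × ℝ => Real.log p.2 - Real.log p.1) ∘ (fun ω =>
          (Real.exp (μ + σ * ξ ω),
           Real.exp (ν + τ * (ρ * ξ ω + Real.sqrt (1 - ρ ^ 2) * ξ' ω))))) P := by
      rw [← Measure.map_map hg2 hpm1, ← Measure.map_map hg2 hpm2, h]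
    have hgL : ((fun p : ℝ × ℝ => Real.log p.2 - Real.log p.1) ∘ (fun ω =>
          (ε * Real.exp (κ + ψ * ζ ω), (1 - ε) * Real.exp (κ + ψ * ζ ω))))
        = fun _ : Ω => Real.log (1 - ε) - Real.log ε := by
      funext ω
      simp only [Function.comp_apply]
      rw [Real.log_mul h1ε.ne' (Real.exp_ne_zero _),
        Real.log_mul hε0.ne' (Real.exp_ne_zero _)]
      ring
    have hgR : ((fun p : ℝ × ℝ => Real.log p.2 - Real.log p.1) ∘ (fun ω =>
          (Real.exp (μ + σ * ξ ω),
           Real.exp (ν + τ * (ρ * ξ ω + Real.sqrt (1 - ρ ^ 2) * ξ' ω)))))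
        = fun ω => (ν - μ) + (τ * ρ - σ) * ξ ω + (τ * Real.sqrt (1 - ρ ^ 2)) * ξ' ω := by
      funext ω
      simp only [Function.comp_apply, Real.log_exp]
      ring
    rw [hgL, hgR, Measure.map_const, measure_univ, one_smul] at hB
    obtain ⟨ha0, hb0, hC⟩ := degenerate P ξ ξ' hξmeas hξ'meas hξ hξ' hindep _ _ _ _ hB.symm
    -- extract the parameters
    obtain ⟨hρl, hρr⟩ := hρ
    have hsqnn : (0:ℝ) ≤ 1 - ρ ^ 2 := by nlinarith
    have hsqrt0 : Real.sqrt (1 - ρ ^ 2) = 0 := by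
      rcases mul_eq_zero.mp hb0 with h' | h'
      · exact absurd h' hτ.ne'
      · exact h'
    have hρsq : ρ ^ 2 = 1 := by
      have := (Real.sqrt_eq_zero hsqnn).mp hsqrt0
      linarith
    have hτρ : τ * ρ = σ := by linarith
    have hρpos : 0 < ρ := by nlinarith
    have hρ1 : ρ = 1 := by nlinarith
    have hτσ : τ = σ := by rw [hρ1, mul_one] at hτρ; exact hτρ
    refine ⟨hψσ.trans hτσ.symm, hτσ, hρ1, ?_, ?_⟩
    · -- ε
      have h1 : ε * Real.exp κ = Real.exp μ := by
        rw [← hmean, Real.exp_add, Real.exp_log hε0]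
      have h2 : (1 - ε) * Real.exp κ = Real.exp ν := by
        have hν : Real.log (1 - ε) + κ = ν := by linarith
        rw [← hν, Real.exp_add, Real.exp_log h1ε]
      have hS : Real.exp κ = Real.exp μ + Real.exp ν := by
        have h3 : Real.exp κ = ε * Real.exp κ + (1 - ε) * Real.exp κ := by ring
        rw [h1, h2] at h3
        exact h3
      rw [← hS, ← h1]
      field_simp
    · have h1 : ε * Real.exp κ = Real.exp μ := by
        rw [← hmean, Real.exp_add, Real.exp_log hε0]
      have h2 : (1 - ε) * Real.exp κ = Real.exp ν := by
        have hν : Real.log (1 - ε) + κ = ν := by linarith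
        rw [← hν, Real.exp_add, Real.exp_log h1ε]
      have hS : Real.exp κ = Real.exp μ + Real.exp ν := by
        have h3 : Real.exp κ = ε * Real.exp κ + (1 - ε) * Real.exp κ := by ring
        rw [h1, h2] at h3
        exact h3
      rw [← hS, Real.log_exp]
  · rintro ⟨rfl, rfl, rfl, hεdef, hκdef⟩
    have hSpos : (0:ℝ) < Real.exp μ + Real.exp ν := by positivity
    have hκ : Real.exp κ = Real.exp μ + Real.exp ν := by rw [hκdef, Real.exp_log hSpos]
    have hsqrt : Real.sqrt (1 - (1:ℝ) ^ 2) = 0 := by norm_num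
    have hf1 : ∀ z : ℝ, ε * Real.exp (κ + ψ * z) = Real.exp (μ + ψ * z) := by
      intro z
      rw [Real.exp_add, hκ, hεdef, Real.exp_add]
      field_simp
    have hf2 : ∀ z : ℝ, (1 - ε) * Real.exp (κ + ψ * z) = Real.exp (ν + ψ * z) := by
      intro z
      have h1ε' : 1 - ε = Real.exp ν / (Real.exp μ + Real.exp ν) := by
        rw [hεdef]; field_simp; ring
      rw [Real.exp_add, hκ, h1ε', Real.exp_add]
      field_simp
    have hg : Measurable (fun z : ℝ => (Real.exp (μ + ψ * z), Real.exp (ν + ψ * z))) := by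
      fun_prop
    have hfunL : (fun ω => (ε * Real.exp (κ + ψ * ζ ω), (1 - ε) * Real.exp (κ + ψ * ζ ω)))
        = (fun z : ℝ => (Real.exp (μ + ψ * z), Real.exp (ν + ψ * z))) ∘ ζ := by
      funext ω
      simp only [Function.comp_apply, Prod.mk.injEq]
      exact ⟨hf1 _, hf2 _⟩
    have hfunR : (fun ω => (Real.exp (μ + ψ * ξ ω),
          Real.exp (ν + ψ * (1 * ξ ω + Real.sqrt (1 - (1:ℝ) ^ 2) * ξ' ω))))
        = (fun z : ℝ => (Real.exp (μ + ψ * z), Real.exp (ν + ψ * z))) ∘ ξ := by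
      funext ω
      simp only [Function.comp_apply, hsqrt, Prod.mk.injEq]
      norm_num
    rw [hfunL, hfunR, ← Measure.map_map hg hζmeas, ← Measure.map_map hg hξmeas, hζ, hξ]
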